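/- Let H and K be real Hilbert spaces, V_pw ⊆ H and W_pw ⊆ K finite-dimensional subspaces, and V_h ⊆ V_pw, W_h ⊆ W_pw subspaces. Let P⁰ : V_pw → V_pw and P¹ : W_pw → W_pw be linear maps with range(P⁰) ⊆ V_h, P⁰ v = v for all v ∈ V_h, range(P¹) ⊆ W_h, and P¹ w = w for all w ∈ W_h. Let G : V_h → W_h be linear, and let D : W_pw → V_pw be the linear map determined by ⟨D w, φ⟩_H = −⟨w, G P⁰ φ⟩_K for all φ ∈ V_pw, w ∈ W_pw. Denote by Q⁰ : H → V_pw and Q¹ : K → W_pw the orthogonal projections, and by (P⁰)*, (P¹)* the adjoints of P⁰, P¹ as operators on the finite-dimensional inner-product spaces V_pw, W_pw. If u ∈ K and f ∈ H satisfy ⟨u, G ψ⟩_K = −⟨f, ψ⟩_H for all ψ ∈ V_h, then D((P¹)* Q¹ u) = (P⁰)* Q⁰ f. -/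

import Mathlib

open scoped RealInnerProductSpace

/-- Broken-FEEC weak divergence commuting relation (the divergence half of
Theorem 2.2 of the paper): with broken spaces `Vpw ⊆ H`, `Wpw ⊆ K`, conforming subspaces
`Vh ⊆ Vpw`, `Wh ⊆ Wpw`, conforming projections `P⁰`, `P¹`, a differential operator
`G : Vh → Wh`, and `D : Wpw → Vpw` determined by `⟨D w, φ⟩_H = −⟨w, G P⁰ φ⟩_K`,
if `⟨u, G ψ⟩_K = −⟨f, ψ⟩_H` for all `ψ ∈ Vh`, then `D ((P¹)* Q¹ u) = (P⁰)* Q⁰ f`. -/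
theorem stmt2
    {H K : Type*} [NormedAddCommGroup H] [InnerProductSpace ℝ H]
    [NormedAddCommGroup K] [InnerProductSpace ℝ K]
    (Vpw : Submodule ℝ H) (Wpw : Submodule ℝ K)
    [FiniteDimensional ℝ Vpw] [FiniteDimensional ℝ Wpw]
    (Vh : Submodule ℝ Vpw) (Wh : Submodule ℝ Wpw)
    (P0 : Vpw →ₗ[ℝ] Vpw) (P1 : Wpw →ₗ[ℝ] Wpw)
    (hP0range : ∀ v, P0 v ∈ Vh) (hP0fix : ∀ v ∈ Vh, P0 v = v)
    (hP1range : ∀ w, P1 w ∈ Wh) (hP1fix : ∀ w ∈ Wh, P1 w = w)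
    (G : Vh →ₗ[ℝ] Wh) (D : Wpw →ₗ[ℝ] Vpw)
    (hD : ∀ (w : Wpw) (φ : Vpw),
      ⟪((D w : Vpw) : H), ((φ : Vpw) : H)⟫ =
        - ⟪(w : K), ((G ⟨P0 φ, hP0range φ⟩ : Wpw) : K)⟫)
    (u : K) (f : H)
    (hweak : ∀ ψ : Vh, ⟪u, ((G ψ : Wpw) : K)⟫ = - ⟪f, ((ψ : Vpw) : H)⟫) :
    D ((LinearMap.adjoint P1) (Submodule.orthogonalProjection Wpw u)) =
      (LinearMap.adjoint P0) (Submodule.orthogonalProjection Vpw f) := by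
  apply ext_inner_right ℝ
  intro φ
  have key : ∀ (x y : Vpw), ⟪x, y⟫ = ⟪(x : H), (y : H)⟫ := fun x y => rfl
  have keyK : ∀ (x y : Wpw), ⟪x, y⟫ = ⟪(x : K), (y : K)⟫ := fun x y => rfl
  set ψ : Vh := ⟨P0 φ, hP0range φ⟩ with hψ
  rw [key, hD]
  rw [LinearMap.adjoint_inner_left, key]
  have hfix : P1 ((G ψ : Wh) : Wpw) = ((G ψ : Wh) : Wpw) := hP1fix _ (G ψ).2
  calc - ⟪((LinearMap.adjoint P1) (Submodule.orthogonalProjection Wpw u) : K),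
          ((G ψ : Wpw) : K)⟫
      = - ⟪(LinearMap.adjoint P1) (Submodule.orthogonalProjection Wpw u), (G ψ : Wpw)⟫ := by
        rw [keyK]
    _ = - ⟪(Submodule.orthogonalProjection Wpw u : Wpw), P1 (G ψ : Wpw)⟫ := by
        rw [LinearMap.adjoint_inner_left]
    _ = - ⟪u, ((G ψ : Wpw) : K)⟫ := by
        rw [hfix, Submodule.inner_orthogonalProjection_eq_of_mem_right]
    _ = ⟪f, ((ψ : Vpw) : H)⟫ := by rw [hweak ψ]; ring
    _ = ⟪Submodule.orthogonalProjection Vpw f, ((ψ : Vpw) : Vpw)⟫ := by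
        rw [Submodule.inner_orthogonalProjection_eq_of_mem_right]
    _ = ⟪((Submodule.orthogonalProjection Vpw f : Vpw) : H), (P0 φ : H)⟫ := rfl
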